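/- Under the assumptions of the positive-negative definite game with c := ‖A‖·‖P^{1/2} D_η^{1/2}‖·‖Q^{1/2} D_γ^{1/2}‖ < 2, the trajectory of alternating gradient descent is bounded: for all t, ‖x^t‖²_{P^{-1}D_η^{-1}} + ‖y^t‖²_{Q^{-1}D_γ^{-1}} ≤ (‖x^0‖²_{P^{-1}D_η^{-1}} + ‖y^0‖²_{Q^{-1}D_γ^{-1}} + ⟨x^0, A y^0⟩) / (1 - c/2). -/

import Mathlib

open Matrix

section OldSqrt
open scoped ComplexOrder
/-- The positive semidefinite square root of a positive semidefinite matrix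
(the definition `Matrix.PosSemidef.sqrt` of the older Mathlib, since removed). -/
noncomputable def Matrix.PosSemidef.sqrt {n 𝕜 : Type*} [Fintype n] [DecidableEq n] [RCLike 𝕜]
    {A : Matrix n n 𝕜} (hA : A.PosSemidef) : Matrix n n 𝕜 :=
  hA.1.eigenvectorUnitary.1 * diagonal ((↑) ∘ (fun x => Real.sqrt x) ∘ hA.1.eigenvalues) *
    (star hA.1.eigenvectorUnitary : Matrix n n 𝕜)
end OldSqrt

open Polynomial

/-- Operator norm of a matrix induced by the Euclidean norms. -/
noncomputable def matOpNorm {n m : ℕ} (A : Matrix (Fin n) (Fin m) ℝ) : ℝ :=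
  ‖LinearMap.toContinuousLinearMap (Matrix.toEuclideanLin A)‖

lemma sqrt_isHermitian' {k : ℕ} {A : Matrix (Fin k) (Fin k) ℝ} (hA : A.PosSemidef) :
    hA.sqrt.IsHermitian := by
  rw [Matrix.PosSemidef.sqrt, IsHermitian, conjTranspose_mul, conjTranspose_mul,
    diagonal_conjTranspose]
  simp [Matrix.mul_assoc, Matrix.star_eq_conjTranspose, conjTranspose_eq_transpose_of_trivial]
lemma sqrt_mul_self' {k : ℕ} {A : Matrix (Fin k) (Fin k) ℝ} (hA : A.PosSemidef) :
    hA.sqrt * hA.sqrt = A := by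
  have hVU : star (hA.1.eigenvectorUnitary : Matrix (Fin k) (Fin k) ℝ) *
      (hA.1.eigenvectorUnitary : Matrix (Fin k) (Fin k) ℝ) = 1 :=
    (Matrix.mem_unitaryGroup_iff').mp hA.1.eigenvectorUnitary.2
  have hspec : A = (hA.1.eigenvectorUnitary : Matrix (Fin k) (Fin k) ℝ) *
      diagonal (RCLike.ofReal ∘ hA.1.eigenvalues) * star (hA.1.eigenvectorUnitary : Matrix (Fin k) (Fin k) ℝ) :=
    hA.1.spectral_theorem
  conv_rhs => rw [hspec]
  rw [Matrix.PosSemidef.sqrt]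
  simp only [Matrix.mul_assoc]
  rw [← Matrix.mul_assoc (star _) _ (diagonal _ * _), hVU, Matrix.one_mul,
    ← Matrix.mul_assoc (diagonal _) (diagonal _), diagonal_mul_diagonal]
  congr 3
  funext i
  simp [Real.mul_self_sqrt (hA.eigenvalues_nonneg i)]

lemma comm_aeval {R A : Type*} [CommSemiring R] [Semiring A] [Algebra R A] {a b : A}
    (h : Commute b a) (p : R[X]) : Commute b (aeval a p) :=
  Algebra.commute_of_mem_adjoin_singleton_of_commute
    (aeval_mem_adjoin_singleton (p := p) R a) h

lemma pow_conj {n : ℕ} (U A V : Matrix (Fin n) (Fin n) ℝ) (hUV : U * V = 1) (hVU : V * U = 1)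
    (k : ℕ) : (U * A * V) ^ k = U * A ^ k * V := by
  induction k with
  | zero => simp [hUV]
  | succ k ih =>
    rw [pow_succ, ih, pow_succ]
    calc U * A ^ k * V * (U * A * V) = U * A ^ k * (V * U) * A * V := by
          simp only [Matrix.mul_assoc]
    _ = U * (A ^ k * A) * V := by rw [hVU]; simp only [Matrix.mul_one, Matrix.mul_assoc]

lemma aeval_conj {n : ℕ} (U A V : Matrix (Fin n) (Fin n) ℝ) (hUV : U * V = 1) (hVU : V * U = 1)
    (p : Polynomial ℝ) : aeval (U * A * V) p = U * (aeval A p) * V := by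
  induction p using Polynomial.induction_on with
  | C a => simp [Algebra.algebraMap_eq_smul_one, Matrix.mul_smul, Matrix.smul_mul, hUV]
  | add p q hp hq => simp [hp, hq, Matrix.mul_add, Matrix.add_mul]
  | monomial a k ih =>
    simp only [_root_.map_mul, aeval_C, aeval_X_pow, pow_conj U A V hUV hVU,
      Algebra.algebraMap_eq_smul_one]
    simp [Matrix.mul_smul, Matrix.smul_mul]

lemma sqrt_eq_aeval {n : ℕ} {A : Matrix (Fin n) (Fin n) ℝ} (hA : A.PosSemidef) :
    ∃ p : Polynomial ℝ, hA.sqrt = aeval A p := by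
  classical
  set μ := hA.1.eigenvalues with hμ
  set s : Finset ℝ := Finset.univ.image μ with hs
  set p := Lagrange.interpolate s id Real.sqrt with hp
  refine ⟨p, ?_⟩
  set U : Matrix (Fin n) (Fin n) ℝ := (hA.1.eigenvectorUnitary : Matrix (Fin n) (Fin n) ℝ) with hU
  have hUV : U * star U = 1 := (Matrix.mem_unitaryGroup_iff).mp hA.1.eigenvectorUnitary.2
  have hVU : star U * U = 1 := (Matrix.mem_unitaryGroup_iff').mp hA.1.eigenvectorUnitary.2
  have hspec : A = U * diagonal (RCLike.ofReal ∘ μ) * star U := hA.1.spectral_theorem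
  have key : aeval A p = U * diagonal (fun i => Polynomial.eval (μ i) p) * star U := by
    rw [hspec, aeval_conj U _ (star U) hUV hVU]
    congr 1
    congr 1
    have : diagonal (RCLike.ofReal ∘ μ) = Matrix.diagonalAlgHom ℝ μ := by
      simp [Matrix.diagonalAlgHom]; rfl
    have hpt : (aeval μ p : Fin n → ℝ) = fun i => Polynomial.eval (μ i) p := by
      funext i
      have h2 := aeval_algHom_apply (Pi.evalAlgHom ℝ (fun _ : Fin n => ℝ) i) μ p
      simp only [Pi.evalAlgHom_apply] at h2
      rw [← h2, ← Polynomial.coe_aeval_eq_eval]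
    rw [this, aeval_algHom_apply, hpt]
    simp [Matrix.diagonalAlgHom]; rfl
  rw [key]
  have : ∀ i, Polynomial.eval (μ i) p = Real.sqrt (μ i) := by
    intro i
    have hi : μ i ∈ s := Finset.mem_image_of_mem μ (Finset.mem_univ i)
    have := Lagrange.eval_interpolate_at_node (v := id) (r := Real.sqrt)
      (Set.injOn_id _) hi
    simpa [hp] using this
  show hA.sqrt = _
  rw [Matrix.PosSemidef.sqrt]
  congr 1
  congr 1
  funext i j
  simp [diagonal, this]; rfl

lemma norm_eucl {k : ℕ} (u : Fin k → ℝ) :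
    ‖((WithLp.equiv 2 (Fin k → ℝ)).symm u : EuclideanSpace ℝ (Fin k))‖ = Real.sqrt (u ⬝ᵥ u) := by
  rw [EuclideanSpace.norm_eq]
  congr 1
  simp [dotProduct, sq]

lemma dot_mulVec_le {n m : ℕ} (B : Matrix (Fin n) (Fin m) ℝ) (u : Fin n → ℝ) (v : Fin m → ℝ) :
    u ⬝ᵥ (B *ᵥ v) ≤ matOpNorm B * (Real.sqrt (u ⬝ᵥ u) * Real.sqrt (v ⬝ᵥ v)) := by
  set u' : EuclideanSpace ℝ (Fin n) := (WithLp.equiv 2 _).symm u with hu'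
  set v' : EuclideanSpace ℝ (Fin m) := (WithLp.equiv 2 _).symm v with hv'
  have h1 : u ⬝ᵥ (B *ᵥ v) = (inner ℝ u' ((Matrix.toEuclideanLin B) v') : ℝ) := by
    rw [EuclideanSpace.inner_eq_star_dotProduct]
    simp [hu', hv', Matrix.toEuclideanLin_apply, dotProduct, Matrix.mulVec]
    exact Finset.sum_congr rfl fun _ _ => mul_comm _ _
  have h2 : (inner ℝ u' ((Matrix.toEuclideanLin B) v') : ℝ) ≤ ‖u'‖ * ‖(Matrix.toEuclideanLin B) v'‖ :=
    real_inner_le_norm _ _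
  have h3 : ‖(Matrix.toEuclideanLin B) v'‖ ≤ matOpNorm B * ‖v'‖ :=
    (LinearMap.toContinuousLinearMap (Matrix.toEuclideanLin B)).le_opNorm v'
  have h4 : ‖u'‖ = Real.sqrt (u ⬝ᵥ u) := norm_eucl u
  have h5 : ‖v'‖ = Real.sqrt (v ⬝ᵥ v) := norm_eucl v
  calc u ⬝ᵥ (B *ᵥ v) ≤ ‖u'‖ * ‖(Matrix.toEuclideanLin B) v'‖ := h1 ▸ h2
  _ ≤ ‖u'‖ * (matOpNorm B * ‖v'‖) := by
      exact mul_le_mul_of_nonneg_left h3 (norm_nonneg _)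
  _ = matOpNorm B * (Real.sqrt (u ⬝ᵥ u) * Real.sqrt (v ⬝ᵥ v)) := by rw [h4, h5]; ring

lemma matOpNorm_mul_le {n m k : ℕ} (B : Matrix (Fin n) (Fin m) ℝ) (C : Matrix (Fin m) (Fin k) ℝ) :
    matOpNorm (B * C) ≤ matOpNorm B * matOpNorm C := by
  have h : LinearMap.toContinuousLinearMap (Matrix.toEuclideanLin (B * C)) =
      (LinearMap.toContinuousLinearMap (Matrix.toEuclideanLin B)).comp
        (LinearMap.toContinuousLinearMap (Matrix.toEuclideanLin C)) := by
    ext v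
    simp [Matrix.toEuclideanLin_apply, Matrix.mulVec_mulVec]
  rw [matOpNorm, h]
  exact ContinuousLinearMap.opNorm_comp_le _ _

lemma dot_shift {n m : ℕ} (B : Matrix (Fin n) (Fin m) ℝ) (a : Fin n → ℝ) (b : Fin m → ℝ) :
    a ⬝ᵥ (B *ᵥ b) = (Bᵀ *ᵥ a) ⬝ᵥ b := by
  rw [Matrix.mulVec_transpose, ← Matrix.dotProduct_mulVec]

lemma energy_step {n m : ℕ} (A : Matrix (Fin n) (Fin m) ℝ)
    (M : Matrix (Fin n) (Fin n) ℝ) (N : Matrix (Fin m) (Fin m) ℝ)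
    (hM : Mᵀ = M) (hN : Nᵀ = N)
    (hMi : M⁻¹ * M = 1) (hNi : N⁻¹ * N = 1)
    (x x' : Fin n → ℝ) (y y' : Fin m → ℝ)
    (hx' : x' = x + M *ᵥ (A *ᵥ y)) (hy' : y' = y - N *ᵥ (Aᵀ *ᵥ x')) :
    x' ⬝ᵥ (M⁻¹ *ᵥ x') + y' ⬝ᵥ (N⁻¹ *ᵥ y') + x' ⬝ᵥ (A *ᵥ y') =
      x ⬝ᵥ (M⁻¹ *ᵥ x) + y ⬝ᵥ (N⁻¹ *ᵥ y) + x ⬝ᵥ (A *ᵥ y) := by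
  have hMit : (M⁻¹)ᵀ = M⁻¹ := by rw [Matrix.transpose_nonsing_inv, hM]
  have hNit : (N⁻¹)ᵀ = N⁻¹ := by rw [Matrix.transpose_nonsing_inv, hN]
  set w := A *ᵥ y with hw
  set z := Aᵀ *ᵥ x' with hz
  have e1 : M⁻¹ *ᵥ (M *ᵥ w) = w := by rw [Matrix.mulVec_mulVec, hMi, Matrix.one_mulVec]
  have e2 : ∀ a, (M *ᵥ w) ⬝ᵥ (M⁻¹ *ᵥ a) = w ⬝ᵥ a := by
    intro a
    rw [dot_shift, Matrix.mulVec_mulVec, hMit, hMi, Matrix.one_mulVec]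
  have e3 : N⁻¹ *ᵥ (N *ᵥ z) = z := by rw [Matrix.mulVec_mulVec, hNi, Matrix.one_mulVec]
  have e4 : ∀ a, (N *ᵥ z) ⬝ᵥ (N⁻¹ *ᵥ a) = z ⬝ᵥ a := by
    intro a
    rw [dot_shift, Matrix.mulVec_mulVec, hNit, hNi, Matrix.one_mulVec]
  have f1 : x' ⬝ᵥ (A *ᵥ y) = z ⬝ᵥ y := by rw [dot_shift, ← hz]
  have f2 : x' ⬝ᵥ (A *ᵥ (N *ᵥ z)) = z ⬝ᵥ (N *ᵥ z) := by rw [dot_shift, ← hz]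
  have f3 : y ⬝ᵥ z = w ⬝ᵥ x' := by
    rw [hz, dot_shift, Matrix.transpose_transpose, ← hw]
  have qx : x' ⬝ᵥ (M⁻¹ *ᵥ x') =
      x ⬝ᵥ (M⁻¹ *ᵥ x) + x ⬝ᵥ w + w ⬝ᵥ x + (M *ᵥ w) ⬝ᵥ w := by
    rw [hx']
    simp only [Matrix.mulVec_add, add_dotProduct, dotProduct_add, e1, e2]
    ring
  have qy : y' ⬝ᵥ (N⁻¹ *ᵥ y') =
      y ⬝ᵥ (N⁻¹ *ᵥ y) - y ⬝ᵥ z - z ⬝ᵥ y + (N *ᵥ z) ⬝ᵥ z := by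
    rw [hy']
    simp only [Matrix.mulVec_sub, sub_dotProduct, dotProduct_sub, e3, e4]
    ring
  have qc : x' ⬝ᵥ (A *ᵥ y') = z ⬝ᵥ y - z ⬝ᵥ (N *ᵥ z) := by
    rw [hy', Matrix.mulVec_sub, dotProduct_sub, f1, f2]
  rw [qx, qy, qc]
  have g1 : (M *ᵥ w) ⬝ᵥ w = w ⬝ᵥ (M *ᵥ w) := dotProduct_comm _ _
  have g2 : (N *ᵥ z) ⬝ᵥ z = z ⬝ᵥ (N *ᵥ z) := dotProduct_comm _ _
  have g3 : w ⬝ᵥ x = x ⬝ᵥ w := dotProduct_comm _ _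
  have g4 : z ⬝ᵥ y = y ⬝ᵥ z := dotProduct_comm _ _
  have g5 : w ⬝ᵥ x' = w ⬝ᵥ x + w ⬝ᵥ (M *ᵥ w) := by
    rw [hx', dotProduct_add]
  rw [g1, g2, g4, f3, g5, g3]
  ring

lemma cross_bound {n m : ℕ} (A : Matrix (Fin n) (Fin m) ℝ)
    (S : Matrix (Fin n) (Fin n) ℝ) (T : Matrix (Fin m) (Fin m) ℝ)
    (hS : Sᵀ = S) (hT : Tᵀ = T) (hSi : S * S⁻¹ = 1) (hTi : T * T⁻¹ = 1)
    (c : ℝ) (hc0 : 0 ≤ c) (hcb : matOpNorm (S * A * T) ≤ c)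
    (x : Fin n → ℝ) (y : Fin m → ℝ) :
    -(x ⬝ᵥ (A *ᵥ y)) ≤
      c / 2 * (x ⬝ᵥ ((S⁻¹ * S⁻¹) *ᵥ x) + y ⬝ᵥ ((T⁻¹ * T⁻¹) *ᵥ y)) := by
  have hSit : (S⁻¹)ᵀ = S⁻¹ := by rw [Matrix.transpose_nonsing_inv, hS]
  have hTit : (T⁻¹)ᵀ = T⁻¹ := by rw [Matrix.transpose_nonsing_inv, hT]
  set u := S⁻¹ *ᵥ x with hu
  set v := T⁻¹ *ᵥ y with hv
  have hSu : S *ᵥ u = x := by rw [hu, Matrix.mulVec_mulVec, hSi, Matrix.one_mulVec]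
  have hTv : T *ᵥ v = y := by rw [hv, Matrix.mulVec_mulVec, hTi, Matrix.one_mulVec]
  have key1 : u ⬝ᵥ ((S * A * T) *ᵥ v) = x ⬝ᵥ (A *ᵥ y) := by
    rw [← Matrix.mulVec_mulVec, ← Matrix.mulVec_mulVec, hTv, dot_shift, hS, hSu]
  have key2 : u ⬝ᵥ u = x ⬝ᵥ ((S⁻¹ * S⁻¹) *ᵥ x) := by
    rw [eq_comm, ← Matrix.mulVec_mulVec, dot_shift, hSit]
  have key3 : v ⬝ᵥ v = y ⬝ᵥ ((T⁻¹ * T⁻¹) *ᵥ y) := by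
    rw [eq_comm, ← Matrix.mulVec_mulVec, dot_shift, hTit]
  set a := u ⬝ᵥ u with ha
  set b := v ⬝ᵥ v with hb
  have ha0 : 0 ≤ a := by
    rw [ha]; exact Finset.sum_nonneg fun i _ => mul_self_nonneg _
  have hb0 : 0 ≤ b := by
    rw [hb]; exact Finset.sum_nonneg fun i _ => mul_self_nonneg _
  have step1 : -(x ⬝ᵥ (A *ᵥ y)) = u ⬝ᵥ ((S * A * T) *ᵥ (-v)) := by
    rw [Matrix.mulVec_neg, dotProduct_neg, key1]
  have step2 : u ⬝ᵥ ((S * A * T) *ᵥ (-v)) ≤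
      matOpNorm (S * A * T) * (Real.sqrt a * Real.sqrt b) := by
    have := dot_mulVec_le (S * A * T) u (-v)
    have hnb : (-v) ⬝ᵥ (-v) = b := by rw [neg_dotProduct, dotProduct_neg, neg_neg]
    rwa [hnb] at this
  have step3 : matOpNorm (S * A * T) * (Real.sqrt a * Real.sqrt b) ≤
      c * (Real.sqrt a * Real.sqrt b) :=
    mul_le_mul_of_nonneg_right hcb (mul_nonneg (Real.sqrt_nonneg _) (Real.sqrt_nonneg _))
  have step4 : Real.sqrt a * Real.sqrt b ≤ (a + b) / 2 := by
    nlinarith [sq_nonneg (Real.sqrt a - Real.sqrt b), Real.sq_sqrt ha0, Real.sq_sqrt hb0]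
  calc -(x ⬝ᵥ (A *ᵥ y)) ≤ c * (Real.sqrt a * Real.sqrt b) := by
        rw [step1]; exact le_trans step2 step3
  _ ≤ c * ((a + b) / 2) := mul_le_mul_of_nonneg_left step4 hc0
  _ = c / 2 * (x ⬝ᵥ ((S⁻¹ * S⁻¹) *ᵥ x) + y ⬝ᵥ ((T⁻¹ * T⁻¹) *ᵥ y)) := by
        rw [← key2, ← key3]; ring

lemma commute_sqrt {k : ℕ} {A B : Matrix (Fin k) (Fin k) ℝ} (hA : A.PosSemidef)
    (h : B * A = A * B) : B * hA.sqrt = hA.sqrt * B := by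
  obtain ⟨p, hp⟩ := sqrt_eq_aeval hA
  rw [hp]
  exact comm_aeval h p

lemma herm_transpose {k : ℕ} {A : Matrix (Fin k) (Fin k) ℝ} (h : A.IsHermitian) : Aᵀ = A := by
  ext i j
  have := congrFun (congrFun h.eq i) j
  simpa [Matrix.conjTranspose_apply] using this

/-- main packaging for one side: S = sqrt P * sqrt Dη satisfies Sᵀ = S, S*S = Dη*P. -/
lemma side_facts {k : ℕ} {P D : Matrix (Fin k) (Fin k) ℝ} (hP : P.PosDef) (hD : D.PosDef)
    (hcomm : P * D = D * P) :
    (hP.posSemidef.sqrt * hD.posSemidef.sqrt)ᵀ = hP.posSemidef.sqrt * hD.posSemidef.sqrt ∧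
    (hP.posSemidef.sqrt * hD.posSemidef.sqrt) * (hP.posSemidef.sqrt * hD.posSemidef.sqrt)
      = D * P ∧
    IsUnit (hP.posSemidef.sqrt * hD.posSemidef.sqrt).det := by
  set sP := hP.posSemidef.sqrt with hsP
  set sD := hD.posSemidef.sqrt with hsD
  have c1 : D * sP = sP * D := commute_sqrt hP.posSemidef hcomm.symm
  have c2 : sP * sD = sD * sP := commute_sqrt hD.posSemidef c1.symm
  have hsPt : sPᵀ = sP := herm_transpose (sqrt_isHermitian' hP.posSemidef)
  have hsDt : sDᵀ = sD := herm_transpose (sqrt_isHermitian' hD.posSemidef)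
  have hSt : (sP * sD)ᵀ = sP * sD := by
    rw [Matrix.transpose_mul, hsPt, hsDt, ← c2]
  have hSS : (sP * sD) * (sP * sD) = D * P := by
    calc (sP * sD) * (sP * sD) = sP * (sD * sP) * sD := by
          simp only [Matrix.mul_assoc]
    _ = sP * (sP * sD) * sD := by rw [← c2]
    _ = (sP * sP) * (sD * sD) := by simp only [Matrix.mul_assoc]
    _ = P * D := by rw [sqrt_mul_self' hP.posSemidef, sqrt_mul_self' hD.posSemidef]
    _ = D * P := hcomm
  refine ⟨hSt, hSS, ?_⟩
  have hdet : (sP * sD).det * (sP * sD).det = (D * P).det := by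
    rw [← Matrix.det_mul, hSS]
  have hpos : 0 < (D * P).det := by
    rw [Matrix.det_mul]
    exact mul_pos hD.det_pos hP.det_pos
  have : (sP * sD).det ≠ 0 := by
    intro h0
    rw [h0, mul_zero] at hdet
    exact (lt_irrefl _ (hdet ▸ hpos)).elim
  exact isUnit_iff_ne_zero.mpr this
theorem posneg_bounded_orbits {n m : ℕ}
    (A : Matrix (Fin n) (Fin m) ℝ)
    (P Dη : Matrix (Fin n) (Fin n) ℝ) (Q Dγ : Matrix (Fin m) (Fin m) ℝ)
    (hP : P.PosDef) (hDη : Dη.PosDef) (hQ : Q.PosDef) (hDγ : Dγ.PosDef)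
    (hPcomm : P * Dη = Dη * P) (hQcomm : Q * Dγ = Dγ * Q)
    (c : ℝ)
    (hc : c = matOpNorm A * matOpNorm (hP.posSemidef.sqrt * hDη.posSemidef.sqrt) *
        matOpNorm (hQ.posSemidef.sqrt * hDγ.posSemidef.sqrt))
    (hc2 : c < 2)
    (xs : ℕ → Fin n → ℝ) (ys : ℕ → Fin m → ℝ)
    (hx : ∀ t, xs (t + 1) = xs t + Dη *ᵥ (P *ᵥ (A *ᵥ ys t)))
    (hy : ∀ t, ys (t + 1) = ys t - Dγ *ᵥ (Q *ᵥ (Aᵀ *ᵥ xs (t + 1)))) :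
    ∀ t, xs t ⬝ᵥ ((P⁻¹ * Dη⁻¹) *ᵥ xs t) + ys t ⬝ᵥ ((Q⁻¹ * Dγ⁻¹) *ᵥ ys t) ≤
      (xs 0 ⬝ᵥ ((P⁻¹ * Dη⁻¹) *ᵥ xs 0) + ys 0 ⬝ᵥ ((Q⁻¹ * Dγ⁻¹) *ᵥ ys 0) +
          xs 0 ⬝ᵥ (A *ᵥ ys 0)) / (1 - c / 2) := by
  obtain ⟨hSt, hSS, hSdet⟩ := side_facts hP hDη hPcomm
  obtain ⟨hTt, hTS, hTdet⟩ := side_facts hQ hDγ hQcomm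
  set S := hP.posSemidef.sqrt * hDη.posSemidef.sqrt with hSdef
  set T := hQ.posSemidef.sqrt * hDγ.posSemidef.sqrt with hTdef
  set M := Dη * P with hMdef
  set N := Dγ * Q with hNdef
  have hSS' : S * S = M := hSS
  have hTS' : T * T = N := hTS
  have hMdet : IsUnit M.det := by
    rw [← hSS', Matrix.det_mul]
    exact hSdet.mul hSdet
  have hNdet : IsUnit N.det := by
    rw [← hTS', Matrix.det_mul]
    exact hTdet.mul hTdet
  have hMt : Mᵀ = M := by
    rw [hMdef, Matrix.transpose_mul, herm_transpose hP.1, herm_transpose hDη.1, hPcomm]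
  have hNt : Nᵀ = N := by
    rw [hNdef, Matrix.transpose_mul, herm_transpose hQ.1, herm_transpose hDγ.1, hQcomm]
  have hMinv : P⁻¹ * Dη⁻¹ = M⁻¹ := (Matrix.mul_inv_rev Dη P).symm
  have hNinv : Q⁻¹ * Dγ⁻¹ = N⁻¹ := (Matrix.mul_inv_rev Dγ Q).symm
  have hMS : M⁻¹ = S⁻¹ * S⁻¹ := by rw [← hSS', Matrix.mul_inv_rev]
  have hNS : N⁻¹ = T⁻¹ * T⁻¹ := by rw [← hTS', Matrix.mul_inv_rev]
  have hSi : S * S⁻¹ = 1 := Matrix.mul_nonsing_inv _ hSdet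
  have hTi : T * T⁻¹ = 1 := Matrix.mul_nonsing_inv _ hTdet
  have hMi : M⁻¹ * M = 1 := Matrix.nonsing_inv_mul _ hMdet
  have hNi : N⁻¹ * N = 1 := Matrix.nonsing_inv_mul _ hNdet
  -- bound on c
  have hc0 : 0 ≤ c := by
    rw [hc]
    exact mul_nonneg (mul_nonneg (norm_nonneg _) (norm_nonneg _)) (norm_nonneg _)
  have hcb : matOpNorm (S * A * T) ≤ c := by
    rw [hc]
    calc matOpNorm (S * A * T) ≤ matOpNorm (S * A) * matOpNorm T :=
          matOpNorm_mul_le _ _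
    _ ≤ matOpNorm S * matOpNorm A * matOpNorm T := by
        exact mul_le_mul_of_nonneg_right (matOpNorm_mul_le _ _) (norm_nonneg _)
    _ = matOpNorm A * matOpNorm S * matOpNorm T := by ring
  -- energy invariance
  set E : ℕ → ℝ := fun t => xs t ⬝ᵥ (M⁻¹ *ᵥ xs t) + ys t ⬝ᵥ (N⁻¹ *ᵥ ys t) +
    xs t ⬝ᵥ (A *ᵥ ys t) with hE
  have hEinv : ∀ t, E t = E 0 := by
    intro t
    induction t with
    | zero => rfl
    | succ t ih =>
      rw [← ih]
      show _ = E t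
      rw [hE]
      refine energy_step A M N hMt hNt hMi hNi (xs t) (xs (t+1)) (ys t) (ys (t+1)) ?_ ?_
      · rw [hx t, Matrix.mulVec_mulVec]
      · rw [hy t, Matrix.mulVec_mulVec]
  intro t
  have hbound := cross_bound A S T hSt hTt hSi hTi c hc0 hcb (xs t) (ys t)
  rw [← hMS, ← hNS] at hbound
  have hEt := hEinv t
  rw [hE] at hEt
  simp only [hMinv, hNinv]
  have hpos : 0 < 1 - c / 2 := by linarith
  rw [le_div_iff₀ hpos]
  nlinarith [hbound, hEt]
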